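/- For any real numbers α and A, the functions y₁(t) = A / cosh(Aαt) and y₂(t) = A tanh(Aαt) satisfy the pump gate system of ODEs: y₁'(t) = -α y₁(t) y₂(t) and y₂'(t) = α y₁(t)² for all t ∈ ℝ. -/

import Mathlib

/-- For any reals `α, A`, the functions `y₁(t) = A sech(Aαt)` and
`y₂(t) = A tanh(Aαt)` solve the pump gate system `y₁' = -α y₁ y₂`, `y₂' = α y₁²`. -/
theorem stmt_7 (α A : ℝ) :
    ∀ t : ℝ,
      HasDerivAt (fun t : ℝ => A / Real.cosh (A * α * t))
        (-α * (A / Real.cosh (A * α * t)) * (A * Real.tanh (A * α * t))) t ∧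
      HasDerivAt (fun t : ℝ => A * Real.tanh (A * α * t))
        (α * (A / Real.cosh (A * α * t)) ^ 2) t := by
  intro t
  have hc : Real.cosh (A * α * t) ≠ 0 := (Real.cosh_pos _).ne'
  have hu : HasDerivAt (fun t : ℝ => A * α * t) (A * α) t := by
    simpa using (hasDerivAt_id t).const_mul (A * α)
  have hcosh : HasDerivAt (fun t : ℝ => Real.cosh (A * α * t))
      (Real.sinh (A * α * t) * (A * α)) t := (Real.hasDerivAt_cosh _).comp t hu
  have hsinh : HasDerivAt (fun t : ℝ => Real.sinh (A * α * t))
      (Real.cosh (A * α * t) * (A * α)) t := (Real.hasDerivAt_sinh _).comp t hu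
  have h1 : Real.cosh (A * α * t) ^ 2 - Real.sinh (A * α * t) ^ 2 = 1 :=
    Real.cosh_sq_sub_sinh_sq _
  constructor
  · have := (hasDerivAt_const t A).div hcosh hc
    refine this.congr_deriv (Eq.symm ?_)
    rw [Real.tanh_eq_sinh_div_cosh]
    field_simp
    ring
  · have hd := (hsinh.div hcosh hc).const_mul A
    have heq : (fun t : ℝ => A * Real.tanh (A * α * t)) =
        fun t : ℝ => A * (Real.sinh (A * α * t) / Real.cosh (A * α * t)) := by
      funext x; rw [Real.tanh_eq_sinh_div_cosh]
    rw [heq]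
    refine hd.congr_deriv (Eq.symm ?_)
    field_simp
    linear_combination -(α * A ^ 2) * Real.cosh_sq_sub_sinh_sq (α * A * t)
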